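/- arXiv:2510.20094 — 3 statements merged into one kernel-verified Lean document; each statement's English description precedes it below -/
import Mathlib

section
/- Assume the resonance hypotheses: sup_{ℓ≥1} ℓ|a_ℓ| < ∞, and there are a > 0 and l, m ∈ ℕ≥1 with m < l and l ≠ 2m such that a_l = a_m = a_{l+m} = a and a_j < a for all j ∉ {l, m, l+m}. Then there exist η > 0, δ > 0 and C > 0 such that for every κ with |κ − 2/a| ≤ δ and every x ∈ ℓ²_w with ‖x‖_w ≤ η solving the stationary Fourier system at κ: |(2 − κa) x_l − κ a x_m x_{l+m}| ≤ C ‖x‖_w³, |(2 − κa) x_m − κ a x_l x_{l+m}| ≤ C ‖x‖_w³, and |(2 − κa) x_{l+m} − κ a x_l x_m| ≤ C ‖x‖_w³. -/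
open scoped BigOperators
open Filter Topology Real

noncomputable section

/-- `x` solves the stationary Fourier system at intensity `κ` for coefficients `a`:
for every `ℓ ≥ 1` the tail series converges absolutely (equivalently, is `Summable` in `ℝ`) and
`ℓ(2 − κ a_ℓ) x_ℓ = κ ∑_{j=1}^{ℓ−1} j a_j x_j x_{ℓ−j}
  + κ ∑_{j=ℓ+1}^∞ (j a_j − (j−ℓ) a_{j−ℓ}) x_j x_{j−ℓ}`,
where the infinite sum is indexed by `j = ℓ + k + 1`, `k : ℕ`. -/
def SolvesMV (a : ℕ → ℝ) (κ : ℝ) (x : ℕ → ℝ) : Prop :=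
  ∀ ℓ : ℕ, 1 ≤ ℓ →
    Summable (fun k : ℕ =>
      (((ℓ + k + 1 : ℕ) : ℝ) * a (ℓ + k + 1) - ((k + 1 : ℕ) : ℝ) * a (k + 1))
        * x (ℓ + k + 1) * x (k + 1)) ∧
    (ℓ : ℝ) * (2 - κ * a ℓ) * x ℓ
      = κ * ∑ j ∈ Finset.Ico 1 ℓ, (j : ℝ) * a j * x j * x (ℓ - j)
        + κ * ∑' k : ℕ,
            (((ℓ + k + 1 : ℕ) : ℝ) * a (ℓ + k + 1) - ((k + 1 : ℕ) : ℝ) * a (k + 1))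
              * x (ℓ + k + 1) * x (k + 1)

/-- The squared weighted norm `∑_{ℓ≥1} (1+ℓ²) x_ℓ²`. -/
def wnormSq (x : ℕ → ℝ) : ℝ := ∑' ℓ : ℕ, (1 + ((ℓ + 1 : ℕ) : ℝ) ^ 2) * x (ℓ + 1) ^ 2

/-- The weighted norm `‖x‖_w = (∑_{ℓ≥1} (1+ℓ²) x_ℓ²)^{1/2}`. -/
def wnorm (x : ℕ → ℝ) : ℝ := Real.sqrt (wnormSq x)

/-- Membership in the weighted space `ℓ²_w`. -/
def MemL2w (x : ℕ → ℝ) : Prop :=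
  Summable fun ℓ : ℕ => (1 + ((ℓ + 1 : ℕ) : ℝ) ^ 2) * x (ℓ + 1) ^ 2

set_option maxHeartbeats 4000000 in
/-- the reduced Lyapunov–Schmidt equations in the resonance case
`a_l = a_m = a_{l+m} = a` (with `m < l`, `l ≠ 2m`): for small solutions near `κ = 2/a`,
the three dominant modes satisfy the quadratic relations up to `O(‖x‖_w³)`. -/
theorem reduced_LS_resonance
    (a : ℕ → ℝ) (hA : ∃ C : ℝ, ∀ ℓ : ℕ, 1 ≤ ℓ → (ℓ : ℝ) * |a ℓ| ≤ C)
    (aval : ℝ) (hav : 0 < aval)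
    (l m : ℕ) (hm : 1 ≤ m) (hml : m < l) (hl2m : l ≠ 2 * m)
    (hal : a l = aval) (ham : a m = aval) (halm : a (l + m) = aval)
    (hout : ∀ j : ℕ, 1 ≤ j → j ≠ l → j ≠ m → j ≠ l + m → a j < aval) :
    ∃ η : ℝ, 0 < η ∧ ∃ δ : ℝ, 0 < δ ∧ ∃ C : ℝ, 0 < C ∧
      ∀ κ : ℝ, |κ - 2 / aval| ≤ δ →
        ∀ x : ℕ → ℝ, MemL2w x → wnorm x ≤ η → SolvesMV a κ x →
          |(2 - κ * aval) * x l - κ * aval * x m * x (l + m)| ≤ C * wnorm x ^ 3 ∧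
          |(2 - κ * aval) * x m - κ * aval * x l * x (l + m)| ≤ C * wnorm x ^ 3 ∧
          |(2 - κ * aval) * x (l + m) - κ * aval * x l * x m| ≤ C * wnorm x ^ 3 := by
  classical
  obtain ⟨C0, hC0⟩ := hA
  set Ca : ℝ := max C0 1 with hCadef
  have hCa1 : (1:ℝ) ≤ Ca := le_max_right _ _
  have hCapos : (0:ℝ) < Ca := lt_of_lt_of_le one_pos hCa1
  have hCa : ∀ j : ℕ, 1 ≤ j → (j:ℝ) * |a j| ≤ Ca := fun j hj => (hC0 j hj).trans (le_max_left _ _)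
  have hCaR : ∀ j : ℕ, 1 ≤ j → |(j:ℝ) * a j| ≤ Ca := by
    intro j hj
    rw [abs_mul, Nat.abs_cast]
    exact hCa j hj
  -- the cutoff N
  set N : ℕ := ⌈2*Ca/aval⌉₊ with hNdef
  have hlarge : ∀ j : ℕ, N < j → a j ≤ aval/2 := by
    intro j hjN
    have hj1 : 1 ≤ j := by omega
    have h1 : 2*Ca/aval ≤ (j:ℝ) := le_trans (Nat.le_ceil _) (by exact_mod_cast hjN.le)
    have h2 := hCa j hj1
    have h3 : |a j| * (2*Ca/aval) ≤ Ca := by nlinarith [abs_nonneg (a j)]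
    have h4 : |a j| ≤ aval/2 := by
      have h5 : |a j| * (2*Ca) ≤ Ca * aval := by
        have h6 := mul_le_mul_of_nonneg_right h3 hav.le
        rw [mul_assoc, div_mul_cancel₀] at h6
        · linarith
        · exact ne_of_gt hav
      nlinarith
    linarith [le_abs_self (a j)]
  -- the spectral gap ε
  set T : Finset ℕ := (Finset.Icc 1 N).filter (fun j => ¬(j = l ∨ j = m ∨ j = l + m)) with hTdef
  set ε : ℝ := if h : T.Nonempty then min (aval/2) (T.inf' h (fun j => aval - a j)) else aval/2
    with hεdef
  have hεhalf : ε ≤ aval/2 := by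
    rw [hεdef]; split
    · exact min_le_left _ _
    · exact le_refl _
  have hεpos : 0 < ε := by
    rw [hεdef]; split
    case isTrue h =>
      refine lt_min (by linarith) ?_
      refine (Finset.lt_inf'_iff h).mpr ?_
      intro b hb
      rw [hTdef, Finset.mem_filter, Finset.mem_Icc] at hb
      push_neg at hb
      have := hout b hb.1.1 hb.2.1 hb.2.2.1 hb.2.2.2
      linarith
    case isFalse h => linarith
  have hgapε : ∀ j : ℕ, 1 ≤ j → ¬(j = l ∨ j = m ∨ j = l + m) → ε ≤ aval - a j := by
    intro j hj1 hoffj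
    by_cases hjN : j ≤ N
    · have hjT : j ∈ T := by
        rw [hTdef, Finset.mem_filter, Finset.mem_Icc]
        exact ⟨⟨hj1, hjN⟩, hoffj⟩
      have hne : T.Nonempty := ⟨j, hjT⟩
      rw [hεdef, dif_pos hne]
      exact le_trans (min_le_right _ _) (Finset.inf'_le _ hjT)
    · have := hlarge j (by omega)
      linarith
  set c : ℝ := ε/(2*aval) with hcdef
  have hcpos : 0 < c := by rw [hcdef]; positivity
  set δ : ℝ := min (1/aval) (ε/(2*aval^2)) with hδdef
  have hδpos : 0 < δ := lt_min (by positivity) (by positivity)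
  refine ⟨1, one_pos, δ, hδpos, ?_⟩
  -- the absolute constants
  have hsum2 : Summable (fun n : ℕ => 1/((n:ℝ)+1)^2) := by
    have h2 : Summable (fun n : ℕ => 1/(n:ℝ)^2) :=
      Real.summable_one_div_nat_pow.mpr one_lt_two
    have := (summable_nat_add_iff 1).mpr h2
    simpa using this
  have hb : Summable (fun k : ℕ => 1/(1 + ((k+1:ℕ):ℝ)^2)) := by
    refine Summable.of_nonneg_of_le (fun k => by positivity) (fun k => ?_) hsum2
    refine one_div_le_one_div_of_le (by positivity) ?_
    push_cast
    linarith [sq_nonneg ((k:ℝ)+1)]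
  set B : ℝ := ∑' k : ℕ, 1/(1 + ((k+1:ℕ):ℝ)^2) with hBdef
  have hB0 : 0 ≤ B := tsum_nonneg (fun k => by positivity)
  set KB : ℝ := (1 + B)/2 with hKBdef
  have hKBpos : 0 < KB := by rw [hKBdef]; linarith
  set M : ℝ := 9*Ca*KB/(aval*c) with hMdef
  have hMpos : 0 < M := by rw [hMdef]; positivity
  set C : ℝ := 18*Ca*M*KB/aval with hCdef
  refine ⟨C, by rw [hCdef]; positivity, ?_⟩
  intro κ hκ x hx hxη hsol
  -- facts about κ
  have habsκ := abs_le.mp hκ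
  have hδ1 : δ ≤ 1/aval := min_le_left _ _
  have hδ2 : δ ≤ ε/(2*aval^2) := min_le_right _ _
  have h21 : (2:ℝ)/aval - 1/aval = 1/aval := by ring
  have hκlb : 1/aval ≤ κ := by linarith [habsκ.1]
  have hκpos : 0 < κ := lt_of_lt_of_le (by positivity) hκlb
  have hκub : κ ≤ 3/aval := by
    have : (2:ℝ)/aval + 1/aval = 3/aval := by ring
    linarith [habsκ.2]
  have hgap : ∀ j : ℕ, 1 ≤ j → ¬(j = l ∨ j = m ∨ j = l + m) → c ≤ 2 - κ * a j := by
    intro j hj1 hoffj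
    have h1 := hgapε j hj1 hoffj
    have h2 : (1/aval) * ε ≤ κ * (aval - a j) :=
      mul_le_mul hκlb h1 hεpos.le hκpos.le
    have h3 : κ * aval ≤ 2 + aval * δ := by
      have h4 : κ ≤ 2/aval + δ := by linarith [habsκ.2]
      have h5 := mul_le_mul_of_nonneg_right h4 hav.le
      have h6 : (2/aval + δ) * aval = 2 + δ * aval := by
        field_simp
      nlinarith
    have h4 : aval * δ ≤ ε/(2*aval) := by
      have h5 := mul_le_mul_of_nonneg_left hδ2 hav.le
      have h6 : aval * (ε/(2*aval^2)) = ε/(2*aval) := by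
        field_simp
      linarith
    have hid : 2 - κ * a j = (2 - κ*aval) + κ*(aval - a j) := by ring
    have e1 : (1/aval)*ε - ε/(2*aval) = ε/(2*aval) := by ring
    have hcval : c = ε/(2*aval) := hcdef
    linarith
  -- facts about x
  have hx' : Summable (fun k : ℕ => (1 + ((k+1:ℕ):ℝ)^2) * x (k+1)^2) := hx
  set X : ℝ := wnorm x with hXdef
  set Q : ℝ := wnormSq x with hQdef
  have hQeq : (∑' k : ℕ, (1 + ((k+1:ℕ):ℝ)^2) * x (k+1)^2) = Q := rfl
  have hQ0 : 0 ≤ Q := by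
    rw [← hQeq]; exact tsum_nonneg (fun k => by positivity)
  have hX0 : 0 ≤ X := Real.sqrt_nonneg _
  have hX2 : X^2 = Q := Real.sq_sqrt hQ0
  have hterm_le : ∀ j : ℕ, 1 ≤ j → (1 + (j:ℝ)^2) * x j^2 ≤ Q := by
    intro j hj
    have h := Summable.le_tsum hx' (j-1) (fun i _ => by positivity)
    rw [show j - 1 + 1 = j from by omega] at h
    exact h
  have hXbd : ∀ j : ℕ, 1 ≤ j → |x j| ≤ X := by
    intro j hj
    have h := hterm_le j hj
    have h2 : x j^2 ≤ Q := by nlinarith [sq_nonneg (x j), sq_nonneg (j:ℝ)]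
    calc |x j| = Real.sqrt (x j^2) := (Real.sqrt_sq_eq_abs _).symm
    _ ≤ Real.sqrt Q := Real.sqrt_le_sqrt h2
    _ = X := rfl
  -- the trivial case x ≡ 0 on indices ≥ 1
  by_cases hXz : X = 0
  · have hz : ∀ j : ℕ, 1 ≤ j → x j = 0 := by
      intro j hj
      have h1 := hXbd j hj
      rw [hXz] at h1
      have h2 := abs_nonneg (x j)
      exact abs_eq_zero.mp (le_antisymm h1 h2)
    rw [hz l (by omega), hz m hm, hz (l+m) (by omega), hXz]
    norm_num
  have hXpos : 0 < X := lt_of_le_of_ne hX0 (Ne.symm hXz)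
  -- ℓ¹ control
  have hgb : ∀ k : ℕ, |x (k+1)| ≤
      ((1 + ((k+1:ℕ):ℝ)^2) * x (k+1)^2 / X + X * (1/(1 + ((k+1:ℕ):ℝ)^2)))/2 := by
    intro k
    set w : ℝ := 1 + ((k+1:ℕ):ℝ)^2 with hwdef
    have hw1 : 1 ≤ w := by
      rw [hwdef]; exact le_add_of_nonneg_right (sq_nonneg _)
    have hw0 : 0 < w := by linarith
    have hu : |x (k+1)|^2 = x (k+1)^2 := sq_abs _
    have e : (w * x (k+1)^2 / X + X * (1/w))/2 - |x (k+1)| =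
        (w^2 * x (k+1)^2 + X^2 - 2*X*w*|x (k+1)|)/(2*X*w) := by
      field_simp
    have hnum : 0 ≤ w^2 * x (k+1)^2 + X^2 - 2*X*w*|x (k+1)| := by
      have e2 : w^2 * x (k+1)^2 + X^2 - 2*X*w*|x (k+1)| = (w*|x (k+1)| - X)^2 := by
        rw [← hu]; ring
      rw [e2]; exact sq_nonneg _
    have := div_nonneg hnum (by positivity : (0:ℝ) ≤ 2*X*w)
    linarith [e ▸ this]
  have hbndsum : Summable (fun k : ℕ =>
      ((1 + ((k+1:ℕ):ℝ)^2) * x (k+1)^2 / X + X * (1/(1 + ((k+1:ℕ):ℝ)^2)))/2) :=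
    ((hx'.div_const X).add (hb.mul_left X)).div_const 2
  have habs : Summable (fun k : ℕ => |x (k+1)|) :=
    Summable.of_nonneg_of_le (fun k => abs_nonneg _) hgb hbndsum
  have hgsum : ∑' k : ℕ, |x (k+1)| ≤ KB * X := by
    have h1 := Summable.tsum_le_tsum hgb habs hbndsum
    have h2 : ∑' k : ℕ,
        ((1 + ((k+1:ℕ):ℝ)^2) * x (k+1)^2 / X + X * (1/(1 + ((k+1:ℕ):ℝ)^2)))/2
        = (Q/X + X*B)/2 := by
      rw [tsum_div_const, Summable.tsum_add (hx'.div_const X) (hb.mul_left X), tsum_div_const,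
        tsum_mul_left, hQeq, hBdef]
    have h3 : Q/X = X := by
      rw [← hX2, pow_two, mul_div_assoc, div_self hXz, mul_one]
    rw [h2, h3] at h1
    have h4 : (X + X*B)/2 = KB * X := by rw [hKBdef]; ring
    linarith
  -- shifted sums
  have hswap : ∀ L k : ℕ, |x (L+k+1)| = |x (k+L+1)| := by
    intro L k
    rw [show L+k+1 = k+L+1 from by omega]
  have hshift : ∀ L : ℕ, Summable (fun k : ℕ => |x (L+k+1)|) := by
    intro L
    exact ((summable_nat_add_iff L).mpr habs).congr (fun k => (hswap L k).symm)
  have hshiftsum : ∀ L : ℕ, ∑' k : ℕ, |x (L+k+1)| ≤ KB * X := by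
    intro L
    have h1 : ∑' k : ℕ, |x (L+k+1)| = ∑' k : ℕ, |x (k+L+1)| :=
      tsum_congr (fun k => hswap L k)
    have h2 := Summable.sum_add_tsum_nat_add (f := fun k => |x (k+1)|) L habs
    have h3 : 0 ≤ ∑ i ∈ Finset.range L, |x (i+1)| :=
      Finset.sum_nonneg (fun _ _ => abs_nonneg _)
    rw [h1]
    have h4 : ∑' k : ℕ, |x (k+L+1)| = ∑' k : ℕ, |x ((k+L)+1)| := rfl
    rw [h4]
    linarith [hgsum]
  -- finite sums of |x (φ j)|
  have hfs : ∀ (s : Finset ℕ) (φ : ℕ → ℕ), (∀ j ∈ s, 1 ≤ φ j) →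
      (∀ j ∈ s, ∀ j' ∈ s, φ j = φ j' → j = j') →
      ∑ j ∈ s, |x (φ j)| ≤ KB * X := by
    intro s φ h1 hinj
    have e : ∑ j ∈ s, |x (φ j)| = ∑ i ∈ s.image (fun j => φ j - 1), |x (i+1)| := by
      rw [Finset.sum_image (by
        intro p hp q hq hpq
        exact hinj p hp q hq (by have := h1 p hp; have := h1 q hq; simp only at hpq; omega))]
      refine Finset.sum_congr rfl (fun j hj => ?_)
      rw [show φ j - 1 + 1 = φ j from by have := h1 j hj; omega]
    rw [e]
    exact le_trans (Summable.sum_le_tsum _ (fun i _ => abs_nonneg _) habs) hgsum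
  -- coefficient bounds in the tail
  have habs_tsum : ∀ F : ℕ → ℝ, Summable (fun k : ℕ => |F k|) →
      |∑' k : ℕ, F k| ≤ ∑' k : ℕ, |F k| := by
    intro F hF
    have h1 : Summable (fun k : ℕ => ‖F k‖) := by simpa only [Real.norm_eq_abs] using hF
    have h2 := norm_tsum_le_tsum_norm h1
    simpa only [Real.norm_eq_abs] using h2
  have htri : ∀ y z : ℝ, |κ*y + κ*z| ≤ κ*|y| + κ*|z| := by
    intro y z
    have h := abs_add_le (κ*y) (κ*z)
    rw [abs_mul, abs_mul, abs_of_pos hκpos] at h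
    exact h
  have hcoefT : ∀ L k : ℕ,
      |(((L+k+1:ℕ):ℝ) * a (L+k+1) - ((k+1:ℕ):ℝ) * a (k+1))| ≤ 2*Ca := by
    intro L k
    have h1 := hCaR (L+k+1) (by omega)
    have h2 := hCaR (k+1) (by omega)
    calc |((L+k+1:ℕ):ℝ) * a (L+k+1) - ((k+1:ℕ):ℝ) * a (k+1)|
        ≤ |((L+k+1:ℕ):ℝ) * a (L+k+1)| + |((k+1:ℕ):ℝ) * a (k+1)| := abs_sub _ _
    _ ≤ 2*Ca := by linarith
  have httermbd : ∀ L k : ℕ,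
      |(((L+k+1:ℕ):ℝ) * a (L+k+1) - ((k+1:ℕ):ℝ) * a (k+1)) * x (L+k+1) * x (k+1)|
        ≤ 2*Ca * (|x (L+k+1)| * |x (k+1)|) := by
    intro L k
    rw [abs_mul, abs_mul, mul_assoc]
    exact mul_le_mul_of_nonneg_right (hcoefT L k) (by positivity)
  have htailS : ∀ L : ℕ, Summable (fun k : ℕ =>
      |(((L+k+1:ℕ):ℝ) * a (L+k+1) - ((k+1:ℕ):ℝ) * a (k+1)) * x (L+k+1) * x (k+1)|) := by
    intro L
    refine Summable.of_nonneg_of_le (fun k => abs_nonneg _) (fun k => ?_)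
      (habs.mul_left (2*Ca*X))
    have h1 : |x (L+k+1)| * |x (k+1)| ≤ X * |x (k+1)| :=
      mul_le_mul_of_nonneg_right (hXbd (L+k+1) (by omega)) (abs_nonneg _)
    calc |(((L+k+1:ℕ):ℝ) * a (L+k+1) - ((k+1:ℕ):ℝ) * a (k+1)) * x (L+k+1) * x (k+1)|
        ≤ 2*Ca * (|x (L+k+1)| * |x (k+1)|) := httermbd L k
    _ ≤ 2*Ca * (X * |x (k+1)|) := mul_le_mul_of_nonneg_left h1 (by linarith)
    _ = 2*Ca*X * |x (k+1)| := by ring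
  have htailcrude : ∀ L : ℕ,
      |∑' k : ℕ, (((L+k+1:ℕ):ℝ) * a (L+k+1) - ((k+1:ℕ):ℝ) * a (k+1)) * x (L+k+1) * x (k+1)|
        ≤ 2*Ca*KB*X^2 := by
    intro L
    have hb1 : ∀ k : ℕ,
        |(((L+k+1:ℕ):ℝ) * a (L+k+1) - ((k+1:ℕ):ℝ) * a (k+1)) * x (L+k+1) * x (k+1)|
          ≤ 2*Ca*X * |x (k+1)| := by
      intro k
      have h1 : |x (L+k+1)| * |x (k+1)| ≤ X * |x (k+1)| :=
        mul_le_mul_of_nonneg_right (hXbd (L+k+1) (by omega)) (abs_nonneg _)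
      calc |(((L+k+1:ℕ):ℝ) * a (L+k+1) - ((k+1:ℕ):ℝ) * a (k+1)) * x (L+k+1) * x (k+1)|
          ≤ 2*Ca * (|x (L+k+1)| * |x (k+1)|) := httermbd L k
      _ ≤ 2*Ca * (X * |x (k+1)|) := mul_le_mul_of_nonneg_left h1 (by linarith)
      _ = 2*Ca*X * |x (k+1)| := by ring
    have hstep1 := habs_tsum _ (htailS L)
    calc |∑' k : ℕ, (((L+k+1:ℕ):ℝ) * a (L+k+1) - ((k+1:ℕ):ℝ) * a (k+1)) * x (L+k+1) * x (k+1)|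
        ≤ ∑' k : ℕ,
          |(((L+k+1:ℕ):ℝ) * a (L+k+1) - ((k+1:ℕ):ℝ) * a (k+1)) * x (L+k+1) * x (k+1)| := hstep1
    _ ≤ ∑' k : ℕ, 2*Ca*X * |x (k+1)| := Summable.tsum_le_tsum hb1 (htailS L) (habs.mul_left _)
    _ = 2*Ca*X * ∑' k : ℕ, |x (k+1)| := tsum_mul_left
    _ ≤ 2*Ca*X * (KB*X) := mul_le_mul_of_nonneg_left hgsum (by positivity)
    _ = 2*Ca*KB*X^2 := by ring
  have hfincrude : ∀ L : ℕ,
      |∑ i ∈ Finset.Ico 1 L, (i:ℝ) * a i * x i * x (L-i)| ≤ Ca*KB*X^2 := by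
    intro L
    calc |∑ i ∈ Finset.Ico 1 L, (i:ℝ) * a i * x i * x (L-i)|
        ≤ ∑ i ∈ Finset.Ico 1 L, |(i:ℝ) * a i * x i * x (L-i)| :=
        Finset.abs_sum_le_sum_abs _ _
    _ ≤ ∑ i ∈ Finset.Ico 1 L, Ca*X*|x i| := by
        refine Finset.sum_le_sum (fun i hi => ?_)
        have hiI := Finset.mem_Ico.mp hi
        have h1 := hCaR i hiI.1
        have h2 := hXbd (L-i) (by omega)
        rw [abs_mul, abs_mul]
        calc |(i:ℝ) * a i| * |x i| * |x (L-i)|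
            ≤ Ca * |x i| * X :=
            mul_le_mul (mul_le_mul_of_nonneg_right h1 (abs_nonneg _)) h2 (abs_nonneg _)
              (by positivity)
        _ = Ca*X*|x i| := by ring
    _ = Ca*X * ∑ i ∈ Finset.Ico 1 L, |x i| := by rw [Finset.mul_sum]
    _ ≤ Ca*X*(KB*X) := by
        refine mul_le_mul_of_nonneg_left
          (hfs _ (fun i => i) (fun i hi => (Finset.mem_Ico.mp hi).1) (fun _ _ _ _ h => h))
          (by positivity)
    _ = Ca*KB*X^2 := by ring
  -- off-resonant modes are quadratically small
  have hoffb : ∀ j : ℕ, 1 ≤ j → ¬(j = l ∨ j = m ∨ j = l + m) → |x j| ≤ M*X^2 := by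
    intro j hj1 hoffj
    obtain ⟨hsumj, heqj⟩ := hsol j hj1
    have h1 := hfincrude j
    have h2 := htailcrude j
    have hRHS : |(j:ℝ) * (2 - κ * a j) * x j| ≤ 3*κ*Ca*KB*X^2 := by
      rw [heqj]
      refine le_trans (htri _ _) ?_
      have h3 := add_le_add (mul_le_mul_of_nonneg_left h1 hκpos.le)
        (mul_le_mul_of_nonneg_left h2 hκpos.le)
      have e2 : κ*(Ca*KB*X^2) + κ*(2*Ca*KB*X^2) = 3*κ*Ca*KB*X^2 := by ring
      linarith
    have hgj := hgap j hj1 hoffj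
    have hj' : (1:ℝ) ≤ (j:ℝ) := by exact_mod_cast hj1
    have hLHS : c*|x j| ≤ |(j:ℝ) * (2 - κ * a j) * x j| := by
      rw [abs_mul, abs_mul, Nat.abs_cast, abs_of_pos (lt_of_lt_of_le hcpos hgj)]
      have h0 := abs_nonneg (x j)
      have h4 : (2 - κ * a j) ≤ (j:ℝ) * (2 - κ * a j) :=
        le_mul_of_one_le_left (le_trans hcpos.le hgj) hj'
      exact mul_le_mul_of_nonneg_right (le_trans hgj h4) h0
    have hfinal : c*|x j| ≤ (9*Ca*KB/aval)*X^2 := by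
      have h6 : 3*κ ≤ 9/aval := by
        have h8 := mul_le_mul_of_nonneg_left hκub (by norm_num : (0:ℝ) ≤ 3)
        calc 3*κ ≤ 3*(3/aval) := h8
        _ = 9/aval := by ring
      have h7 : (0:ℝ) ≤ Ca*KB*X^2 := by positivity
      have h5 : 3*κ*Ca*KB*X^2 ≤ (9*Ca*KB/aval)*X^2 := by
        calc 3*κ*Ca*KB*X^2 = (3*κ)*(Ca*KB*X^2) := by ring
        _ ≤ (9/aval)*(Ca*KB*X^2) := mul_le_mul_of_nonneg_right h6 h7
        _ = (9*Ca*KB/aval)*X^2 := by ring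
      linarith [le_trans hLHS hRHS]
    have hc0 : c ≠ 0 := ne_of_gt hcpos
    have ha0 : aval ≠ 0 := ne_of_gt hav
    have hMX : M*X^2 = ((9*Ca*KB/aval)*X^2)/c := by
      rw [hMdef]; field_simp
    rw [hMX]
    calc |x j| = c*|x j|/c := by field_simp
    _ ≤ ((9*Ca*KB/aval)*X^2)/c := by gcongr
  -- product bound when one factor is off-resonant
  have hprod : ∀ p q : ℕ, 1 ≤ p → 1 ≤ q →
      (¬(p = l ∨ p = m ∨ p = l + m) ∨ ¬(q = l ∨ q = m ∨ q = l + m)) →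
      |x p| * |x q| ≤ M*X^2*(|x p| + |x q|) := by
    intro p q hp hq h
    have h0p := abs_nonneg (x p)
    have h0q := abs_nonneg (x q)
    have hMX2 : (0:ℝ) ≤ M*X^2 := by positivity
    rcases h with h | h
    · have h1 := hoffb p hp h
      calc |x p| * |x q| ≤ (M*X^2) * |x q| := mul_le_mul_of_nonneg_right h1 h0q
      _ ≤ M*X^2*(|x p| + |x q|) :=
          mul_le_mul_of_nonneg_left (by linarith) hMX2
    · have h1 := hoffb q hq h
      calc |x p| * |x q| ≤ |x p| * (M*X^2) := mul_le_mul_of_nonneg_left h1 h0p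
      _ = (M*X^2) * |x p| := by ring
      _ ≤ M*X^2*(|x p| + |x q|) :=
          mul_le_mul_of_nonneg_left (by linarith) hMX2
  -- refined bound on (pieces of) the finite convolution sum
  have hfinbound : ∀ (L : ℕ) (s : Finset ℕ), (∀ i ∈ s, i ∈ Finset.Ico 1 L) →
      (∀ i ∈ s, ¬(i = l ∨ i = m ∨ i = l + m) ∨ ¬(L-i = l ∨ L-i = m ∨ L-i = l + m)) →
      |∑ i ∈ s, (i:ℝ) * a i * x i * x (L-i)| ≤ Ca*(M*X^2)*(2*(KB*X)) := by
    intro L s hsub hoff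
    have hstep : ∀ i ∈ s, |(i:ℝ) * a i * x i * x (L-i)|
        ≤ Ca*(M*X^2*(|x i| + |x (L-i)|)) := by
      intro i hi
      have hiI := Finset.mem_Ico.mp (hsub i hi)
      have h1 := hCaR i hiI.1
      have h2 := hprod i (L-i) hiI.1 (by omega) (hoff i hi)
      rw [abs_mul, abs_mul, mul_assoc]
      exact mul_le_mul h1 h2 (by positivity) (by linarith)
    calc |∑ i ∈ s, (i:ℝ) * a i * x i * x (L-i)|
        ≤ ∑ i ∈ s, |(i:ℝ) * a i * x i * x (L-i)| := Finset.abs_sum_le_sum_abs _ _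
    _ ≤ ∑ i ∈ s, Ca*(M*X^2*(|x i| + |x (L-i)|)) := Finset.sum_le_sum hstep
    _ = Ca*(M*X^2)*(∑ i ∈ s, |x i| + ∑ i ∈ s, |x (L-i)|) := by
        rw [← Finset.mul_sum, ← Finset.mul_sum, Finset.sum_add_distrib]
        ring
    _ ≤ Ca*(M*X^2)*(2*(KB*X)) := by
        have hs1 : ∑ i ∈ s, |x i| ≤ KB*X :=
          hfs s (fun i => i) (fun i hi => (Finset.mem_Ico.mp (hsub i hi)).1)
            (fun _ _ _ _ h => h)
        have hs2 : ∑ i ∈ s, |x (L-i)| ≤ KB*X := by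
          refine hfs s (fun i => L - i) (fun i hi => ?_) (fun p hp q hq hpq => ?_)
          · have := Finset.mem_Ico.mp (hsub i hi); show 1 ≤ L - i; omega
          · have h1 := Finset.mem_Ico.mp (hsub p hp)
            have h2 := Finset.mem_Ico.mp (hsub q hq)
            have h3 : L - p = L - q := hpq
            omega
        exact mul_le_mul_of_nonneg_left (by linarith) (by positivity)
  -- refined bound on (pieces of) the tail sum
  have htailbound : ∀ (L : ℕ) (F : ℕ → ℝ),
      (∀ k : ℕ, F k = 0 ∨
        (F k = (((L+k+1:ℕ):ℝ) * a (L+k+1) - ((k+1:ℕ):ℝ) * a (k+1)) * x (L+k+1) * x (k+1) ∧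
          (¬(k+1 = l ∨ k+1 = m ∨ k+1 = l + m) ∨
            ¬(L+k+1 = l ∨ L+k+1 = m ∨ L+k+1 = l + m)))) →
      |∑' k : ℕ, F k| ≤ 2*Ca*(M*X^2)*(2*(KB*X)) := by
    intro L F hF
    have hBd : ∀ k : ℕ, |F k| ≤ 2*Ca*(M*X^2)*(|x (k+1)| + |x (L+k+1)|) := by
      intro k
      rcases hF k with h | ⟨hEq, hOff⟩
      · rw [h, abs_zero]; positivity
      · rw [hEq]
        calc |(((L+k+1:ℕ):ℝ) * a (L+k+1) - ((k+1:ℕ):ℝ) * a (k+1)) * x (L+k+1) * x (k+1)|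
            ≤ 2*Ca * (|x (L+k+1)| * |x (k+1)|) := httermbd L k
        _ = 2*Ca * (|x (k+1)| * |x (L+k+1)|) := by ring
        _ ≤ 2*Ca * (M*X^2*(|x (k+1)| + |x (L+k+1)|)) := by
            refine mul_le_mul_of_nonneg_left ?_ (by linarith)
            exact hprod (k+1) (L+k+1) (by omega) (by omega) hOff
        _ = 2*Ca*(M*X^2)*(|x (k+1)| + |x (L+k+1)|) := by ring
    have hbdS : Summable (fun k : ℕ => 2*Ca*(M*X^2)*(|x (k+1)| + |x (L+k+1)|)) :=
      (habs.add (hshift L)).mul_left _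
    have hFabs : Summable (fun k : ℕ => |F k|) :=
      Summable.of_nonneg_of_le (fun k => abs_nonneg _) hBd hbdS
    calc |∑' k : ℕ, F k| ≤ ∑' k : ℕ, |F k| := habs_tsum F hFabs
    _ ≤ ∑' k : ℕ, 2*Ca*(M*X^2)*(|x (k+1)| + |x (L+k+1)|) := Summable.tsum_le_tsum hBd hFabs hbdS
    _ = 2*Ca*(M*X^2)*(∑' k : ℕ, (|x (k+1)| + |x (L+k+1)|)) := tsum_mul_left
    _ = 2*Ca*(M*X^2)*((∑' k : ℕ, |x (k+1)|) + (∑' k : ℕ, |x (L+k+1)|)) := by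
        rw [Summable.tsum_add habs (hshift L)]
    _ ≤ 2*Ca*(M*X^2)*(2*(KB*X)) := by
        have h1 := add_le_add hgsum (hshiftsum L)
        exact mul_le_mul_of_nonneg_left (by linarith) (by positivity)
  -- the master estimate for resonant modes with a single resonant tail term
  have key2 : ∀ (L k0 : ℕ), 1 ≤ L →
      (∀ i ∈ Finset.Ico 1 L,
        ¬(i = l ∨ i = m ∨ i = l + m) ∨ ¬(L-i = l ∨ L-i = m ∨ L-i = l + m)) →
      (∀ k : ℕ, k ≠ k0 →
        ¬(k+1 = l ∨ k+1 = m ∨ k+1 = l + m) ∨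
          ¬(L+k+1 = l ∨ L+k+1 = m ∨ L+k+1 = l + m)) →
      |(L:ℝ) * (2 - κ * a L) * x L
        - κ * ((((L+k0+1:ℕ):ℝ) * a (L+k0+1) - ((k0+1:ℕ):ℝ) * a (k0+1))
            * x (L+k0+1) * x (k0+1))|
        ≤ κ*(6*Ca*M*KB)*X^3 := by
    intro L k0 hL hfoff htoff
    obtain ⟨hsumL, heqL⟩ := hsol L hL
    have hsplit := Summable.tsum_eq_add_tsum_ite hsumL k0
    have hfin := hfinbound L (Finset.Ico 1 L) (fun i hi => hi) hfoff
    have htl : |∑' k : ℕ, (if k = k0 then 0 else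
        (((L+k+1:ℕ):ℝ) * a (L+k+1) - ((k+1:ℕ):ℝ) * a (k+1)) * x (L+k+1) * x (k+1))|
        ≤ 2*Ca*(M*X^2)*(2*(KB*X)) := by
      refine htailbound L _ (fun k => ?_)
      by_cases hk : k = k0
      · left; rw [if_pos hk]
      · right; rw [if_neg hk]; exact ⟨rfl, htoff k hk⟩
    have heq2 : (L:ℝ) * (2 - κ * a L) * x L
        - κ * ((((L+k0+1:ℕ):ℝ) * a (L+k0+1) - ((k0+1:ℕ):ℝ) * a (k0+1))
            * x (L+k0+1) * x (k0+1))
        = κ * (∑ i ∈ Finset.Ico 1 L, (i:ℝ) * a i * x i * x (L-i))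
          + κ * (∑' k : ℕ, (if k = k0 then 0 else
              (((L+k+1:ℕ):ℝ) * a (L+k+1) - ((k+1:ℕ):ℝ) * a (k+1))
                * x (L+k+1) * x (k+1))) := by
      rw [heqL, hsplit]; ring
    rw [heq2]
    refine le_trans (htri _ _) ?_
    have h3 := add_le_add (mul_le_mul_of_nonneg_left hfin hκpos.le)
      (mul_le_mul_of_nonneg_left htl hκpos.le)
    have e2 : κ*(Ca*(M*X^2)*(2*(KB*X))) + κ*(2*Ca*(M*X^2)*(2*(KB*X)))
        = κ*(6*Ca*M*KB)*X^3 := by ring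
    linarith
  -- converting the master bound into the final bound
  have hCbound : κ*(6*Ca*M*KB)*X^3 ≤ C*X^3 := by
    have h7 := mul_le_mul_of_nonneg_right hκub (by positivity : (0:ℝ) ≤ 6*Ca*M*KB*X^3)
    have e3 : (3/aval)*(6*Ca*M*KB*X^3) = C*X^3 := by rw [hCdef]; ring
    calc κ*(6*Ca*M*KB)*X^3 = κ*(6*Ca*M*KB*X^3) := by ring
    _ ≤ (3/aval)*(6*Ca*M*KB*X^3) := h7
    _ = C*X^3 := e3
  refine ⟨?_, ?_, ?_⟩
  · -- the equation for x l
    have hfoff : ∀ i ∈ Finset.Ico 1 l,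
        ¬(i = l ∨ i = m ∨ i = l + m) ∨ ¬(l-i = l ∨ l-i = m ∨ l-i = l + m) := by
      intro i hi
      have := Finset.mem_Ico.mp hi
      omega
    have htoff : ∀ k : ℕ, k ≠ m-1 →
        ¬(k+1 = l ∨ k+1 = m ∨ k+1 = l + m) ∨
          ¬(l+k+1 = l ∨ l+k+1 = m ∨ l+k+1 = l + m) := by
      intro k hk
      omega
    have h2 := key2 l (m-1) (by omega) hfoff htoff
    rw [show l+(m-1)+1 = l+m from by omega, show m-1+1 = m from by omega] at h2
    rw [hal, halm, ham] at h2
    rw [show (l:ℝ) * (2 - κ * aval) * x l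
        - κ * ((((l+m:ℕ):ℝ) * aval - ((m:ℕ):ℝ) * aval) * x (l+m) * x m)
        = (l:ℝ) * ((2 - κ * aval) * x l - κ * aval * x m * x (l+m)) from by
      push_cast; ring] at h2
    have hl1 : (1:ℝ) ≤ (l:ℝ) := by exact_mod_cast (by omega : 1 ≤ l)
    have h4 : |(2 - κ * aval) * x l - κ * aval * x m * x (l+m)|
        ≤ |(l:ℝ) * ((2 - κ * aval) * x l - κ * aval * x m * x (l+m))| := by
      rw [abs_mul, Nat.abs_cast]
      exact le_mul_of_one_le_left (abs_nonneg _) hl1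
    exact le_trans (le_trans h4 h2) hCbound
  · -- the equation for x m
    have hfoff : ∀ i ∈ Finset.Ico 1 m,
        ¬(i = l ∨ i = m ∨ i = l + m) ∨ ¬(m-i = l ∨ m-i = m ∨ m-i = l + m) := by
      intro i hi
      have := Finset.mem_Ico.mp hi
      omega
    have htoff : ∀ k : ℕ, k ≠ l-1 →
        ¬(k+1 = l ∨ k+1 = m ∨ k+1 = l + m) ∨
          ¬(m+k+1 = l ∨ m+k+1 = m ∨ m+k+1 = l + m) := by
      intro k hk
      omega
    have h2 := key2 m (l-1) hm hfoff htoff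
    rw [show m+(l-1)+1 = l+m from by omega, show l-1+1 = l from by omega] at h2
    rw [ham, halm, hal] at h2
    rw [show (m:ℝ) * (2 - κ * aval) * x m
        - κ * ((((l+m:ℕ):ℝ) * aval - ((l:ℕ):ℝ) * aval) * x (l+m) * x l)
        = (m:ℝ) * ((2 - κ * aval) * x m - κ * aval * x l * x (l+m)) from by
      push_cast; ring] at h2
    have hm1 : (1:ℝ) ≤ (m:ℝ) := by exact_mod_cast hm
    have h4 : |(2 - κ * aval) * x m - κ * aval * x l * x (l+m)|
        ≤ |(m:ℝ) * ((2 - κ * aval) * x m - κ * aval * x l * x (l+m))| := by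
      rw [abs_mul, Nat.abs_cast]
      exact le_mul_of_one_le_left (abs_nonneg _) hm1
    exact le_trans (le_trans h4 h2) hCbound
  · -- the equation for x (l+m)
    obtain ⟨hsumLM, heqLM⟩ := hsol (l+m) (by omega)
    rw [halm] at heqLM
    have hmne : m ≠ l := by omega
    have hsub : ({m, l} : Finset ℕ) ⊆ Finset.Ico 1 (l+m) := by
      intro i hi
      rw [Finset.mem_insert, Finset.mem_singleton] at hi
      rw [Finset.mem_Ico]
      omega
    have hsdiff := Finset.sum_sdiff (f := fun i : ℕ => (i:ℝ) * a i * x i * x (l+m-i)) hsub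
    have hs0 : ∑ i ∈ ({m, l} : Finset ℕ), (i:ℝ) * a i * x i * x (l+m-i)
        = ((l:ℝ)+(m:ℝ))*aval*(x l * x m) := by
      rw [Finset.sum_insert (by simp [hmne]), Finset.sum_singleton]
      rw [show l+m-m = l from by omega, show l+m-l = m from by omega, ham, hal]
      ring
    have hrest := hfinbound (l+m) (Finset.Ico 1 (l+m) \ {m, l})
      (fun i hi => (Finset.mem_sdiff.mp hi).1) (by
        intro i hi
        have h1 := Finset.mem_Ico.mp (Finset.mem_sdiff.mp hi).1
        have h2 : ¬(i = m ∨ i = l) := by simpa using (Finset.mem_sdiff.mp hi).2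
        left
        omega)
    have htl := htailbound (l+m) (fun k =>
        (((l+m+k+1:ℕ):ℝ) * a (l+m+k+1) - ((k+1:ℕ):ℝ) * a (k+1)) * x (l+m+k+1) * x (k+1))
      (fun k => Or.inr ⟨rfl, by omega⟩)
    have heq3 : ((l+m:ℕ):ℝ) * (2 - κ * aval) * x (l+m)
        - κ*(((l:ℝ)+(m:ℝ))*aval*(x l * x m))
        = κ * (∑ i ∈ Finset.Ico 1 (l+m) \ {m, l}, (i:ℝ) * a i * x i * x (l+m-i))
          + κ * (∑' k : ℕ, (((l+m+k+1:ℕ):ℝ) * a (l+m+k+1) - ((k+1:ℕ):ℝ) * a (k+1))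
              * x (l+m+k+1) * x (k+1)) := by
      rw [heqLM, ← hsdiff, hs0]; ring
    have h2 : |((l+m:ℕ):ℝ) * (2 - κ * aval) * x (l+m)
        - κ*(((l:ℝ)+(m:ℝ))*aval*(x l * x m))| ≤ κ*(6*Ca*M*KB)*X^3 := by
      rw [heq3]
      refine le_trans (htri _ _) ?_
      have h3 := add_le_add (mul_le_mul_of_nonneg_left hrest hκpos.le)
        (mul_le_mul_of_nonneg_left htl hκpos.le)
      have e2 : κ*(Ca*(M*X^2)*(2*(KB*X))) + κ*(2*Ca*(M*X^2)*(2*(KB*X)))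
          = κ*(6*Ca*M*KB)*X^3 := by ring
      linarith
    rw [show ((l+m:ℕ):ℝ) * (2 - κ * aval) * x (l+m)
        - κ*(((l:ℝ)+(m:ℝ))*aval*(x l * x m))
        = ((l:ℝ)+(m:ℝ)) * ((2 - κ * aval) * x (l+m) - κ * aval * x l * x m) from by
      push_cast; ring] at h2
    have hl1 : (1:ℝ) ≤ (l:ℝ) := by exact_mod_cast (by omega : 1 ≤ l)
    have hm0 : (0:ℝ) ≤ (m:ℝ) := Nat.cast_nonneg m
    have h4 : |(2 - κ * aval) * x (l+m) - κ * aval * x l * x m|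
        ≤ |((l:ℝ)+(m:ℝ)) * ((2 - κ * aval) * x (l+m) - κ * aval * x l * x m)| := by
      rw [abs_mul, abs_of_nonneg (by linarith : (0:ℝ) ≤ (l:ℝ)+(m:ℝ))]
      exact le_mul_of_one_le_left (abs_nonneg _) (by linarith)
    exact le_trans (le_trans h4 h2) hCbound
end
end

section
/- Let a_ℓ := 1/ℓ for every ℓ ≥ 1 (the log-sine potential W(θ) = −log(2 sin(θ/2))). Then a sequence x ∈ ℓ²_w solves the stationary Fourier system at κ > 0 if and only if (2ℓ − κ) x_ℓ = κ ∑_{j=1}^{ℓ−1} x_j x_{ℓ−j} for every ℓ ≥ 1 (the infinite sums vanish identically since j a_j − (j−ℓ) a_{j−ℓ} = 0). Consequently, if κ > 0 and κ ≠ 2ℓ for every ℓ ≥ 1, then the only x ∈ ℓ²_w solving the stationary Fourier system at κ is x = 0. -/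
open scoped BigOperators
open Filter Topology Real

noncomputable section

/-- for the log-sine potential (`a_ℓ = 1/ℓ`), the stationary Fourier system
reduces to `(2ℓ − κ) x_ℓ = κ ∑_{j<ℓ} x_j x_{ℓ−j}`; consequently, if `κ ∉ {2ℓ : ℓ ≥ 1}` the
only solution in `ℓ²_w` is `x = 0`. -/
theorem logsine_system_and_triviality
    (a : ℕ → ℝ) (ha : ∀ ℓ : ℕ, 1 ≤ ℓ → a ℓ = 1 / (ℓ : ℝ)) :
    (∀ κ : ℝ, 0 < κ → ∀ x : ℕ → ℝ, MemL2w x →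
      (SolvesMV a κ x ↔
        ∀ ℓ : ℕ, 1 ≤ ℓ →
          (2 * (ℓ : ℝ) - κ) * x ℓ = κ * ∑ j ∈ Finset.Ico 1 ℓ, x j * x (ℓ - j))) ∧
    (∀ κ : ℝ, 0 < κ → (∀ ℓ : ℕ, 1 ≤ ℓ → κ ≠ 2 * (ℓ : ℝ)) →
      ∀ x : ℕ → ℝ, MemL2w x → SolvesMV a κ x → ∀ ℓ : ℕ, 1 ≤ ℓ → x ℓ = 0) := by
  -- coefficient of the tail series vanishes identically
  have hmul : ∀ n : ℕ, 1 ≤ n → ((n : ℕ) : ℝ) * a n = 1 := by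
    intro n hn
    rw [ha n hn]
    have : ((n : ℕ) : ℝ) ≠ 0 := by exact_mod_cast Nat.one_le_iff_ne_zero.mp hn
    field_simp
  have hcoef : ∀ ℓ k : ℕ,
      (((ℓ + k + 1 : ℕ) : ℝ) * a (ℓ + k + 1) - ((k + 1 : ℕ) : ℝ) * a (k + 1))
        = 0 := by
    intro ℓ k
    rw [hmul (ℓ + k + 1) (by omega), hmul (k + 1) (by omega)]
    ring
  have hzero : ∀ (x : ℕ → ℝ) (ℓ : ℕ), (fun k : ℕ =>
      (((ℓ + k + 1 : ℕ) : ℝ) * a (ℓ + k + 1) - ((k + 1 : ℕ) : ℝ) * a (k + 1))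
        * x (ℓ + k + 1) * x (k + 1)) = fun _ => (0 : ℝ) := by
    intro x ℓ
    funext k
    rw [hcoef ℓ k]
    ring
  have hsumeq : ∀ (x : ℕ → ℝ) (ℓ : ℕ),
      ∑ j ∈ Finset.Ico 1 ℓ, (j : ℝ) * a j * x j * x (ℓ - j)
        = ∑ j ∈ Finset.Ico 1 ℓ, x j * x (ℓ - j) := by
    intro x ℓ
    refine Finset.sum_congr rfl fun j hj => ?_
    have hj1 : 1 ≤ j := (Finset.mem_Ico.mp hj).1
    rw [hmul j hj1]
    ring
  have hlhs : ∀ (κ : ℝ) (ℓ : ℕ), 1 ≤ ℓ →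
      (ℓ : ℝ) * (2 - κ * a ℓ) = 2 * (ℓ : ℝ) - κ := by
    intro κ ℓ hℓ
    rw [ha ℓ hℓ]
    have : ((ℓ : ℕ) : ℝ) ≠ 0 := by exact_mod_cast Nat.one_le_iff_ne_zero.mp hℓ
    field_simp
  have main : ∀ κ : ℝ, ∀ x : ℕ → ℝ,
      SolvesMV a κ x ↔
        ∀ ℓ : ℕ, 1 ≤ ℓ →
          (2 * (ℓ : ℝ) - κ) * x ℓ = κ * ∑ j ∈ Finset.Ico 1 ℓ, x j * x (ℓ - j) := by
    intro κ x
    constructor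
    · intro h ℓ hℓ
      obtain ⟨-, heq⟩ := h ℓ hℓ
      rw [hzero x ℓ, tsum_zero] at heq
      rw [hsumeq x ℓ] at heq
      calc (2 * (ℓ : ℝ) - κ) * x ℓ = (ℓ : ℝ) * (2 - κ * a ℓ) * x ℓ := by
            rw [hlhs κ ℓ hℓ]
        _ = κ * ∑ j ∈ Finset.Ico 1 ℓ, x j * x (ℓ - j) := by
            rw [heq]; ring
    · intro h ℓ hℓ
      refine ⟨by rw [hzero x ℓ]; exact summable_zero, ?_⟩
      rw [hzero x ℓ, tsum_zero, hsumeq x ℓ, hlhs κ ℓ hℓ, h ℓ hℓ]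
      ring
  constructor
  · intro κ _ x _
    exact main κ x
  · intro κ hκ hne x _ hx ℓ hℓ
    have h := (main κ x).mp hx
    induction ℓ using Nat.strong_induction_on with
    | _ ℓ ih =>
      have heq := h ℓ hℓ
      have hsum0 : ∑ j ∈ Finset.Ico 1 ℓ, x j * x (ℓ - j) = 0 := by
        refine Finset.sum_eq_zero fun j hj => ?_
        obtain ⟨hj1, hj2⟩ := Finset.mem_Ico.mp hj
        rw [ih j hj2 hj1]
        ring
      rw [hsum0, mul_zero] at heq
      have hne' : (2 * (ℓ : ℝ) - κ) ≠ 0 := by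
        intro h0
        exact hne ℓ hℓ (by linarith)
      exact (mul_eq_zero.mp heq).resolve_left hne'
end
end

section
/- Let a_ℓ := 1/ℓ for every ℓ ≥ 1 (the log-sine potential W(θ) = −log(2 sin(θ/2))), let ℓ* ≥ 1 and set κ := 2ℓ*. Then a sequence x ∈ ℓ²_w solves the stationary Fourier system at κ if and only if there exists r ∈ (−1, 1) such that x_{kℓ*} = r^k for every k ≥ 1 and x_j = 0 whenever ℓ* does not divide j. (These are the Fourier cosine coefficients of the Poisson kernel with wave number ℓ*, P_{r,ℓ*}(θ) = (1−r²)/(1 − 2r cos(ℓ*θ) + r²).) -/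
open scoped BigOperators
open Filter Topology Real

noncomputable section

lemma sum_ndvd (x : ℕ → ℝ) (L ℓ : ℕ) (hnd : ¬ L ∣ ℓ)
    (h0 : ∀ j, 1 ≤ j → j < ℓ → ¬ L ∣ j → x j = 0) :
    ∑ j ∈ Finset.Ico 1 ℓ, x j * x (ℓ - j) = 0 := by
  apply Finset.sum_eq_zero
  intro j hj
  rw [Finset.mem_Ico] at hj
  by_cases hdj : L ∣ j
  · have hdn : ¬ L ∣ (ℓ - j) := by
      intro h
      apply hnd
      have hℓ : ℓ = j + (ℓ - j) := by omega
      rw [hℓ]; exact dvd_add hdj h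
    rw [h0 (ℓ - j) (by omega) (by omega) hdn, mul_zero]
  · rw [h0 j hj.1 hj.2 hdj, zero_mul]

lemma sum_dvd (x : ℕ → ℝ) (r : ℝ) (L k : ℕ) (hL : 1 ≤ L) (hk : 1 ≤ k)
    (h1 : ∀ m, 1 ≤ m → m < k → x (m * L) = r ^ m)
    (h0 : ∀ j, 1 ≤ j → j < k * L → ¬ L ∣ j → x j = 0) :
    ∑ j ∈ Finset.Ico 1 (k * L), x j * x (k * L - j) = ((k : ℝ) - 1) * r ^ k := by
  have himg : ((Finset.Ico 1 k).image (· * L)) ⊆ Finset.Ico 1 (k * L) := by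
    intro j hj
    simp only [Finset.mem_image, Finset.mem_Ico] at hj ⊢
    obtain ⟨m, ⟨hm1, hm2⟩, rfl⟩ := hj
    exact ⟨Nat.one_le_iff_ne_zero.2 (Nat.mul_ne_zero (by omega) (by omega)),
      (Nat.mul_lt_mul_right (by omega : 0 < L)).2 hm2⟩
  rw [← Finset.sum_subset himg ?_]
  · rw [Finset.sum_image ?_]
    · rw [Finset.sum_congr rfl (g := fun _ => r ^ k) ?_, Finset.sum_const,
        Nat.card_Ico, nsmul_eq_mul]
      · rw [Nat.cast_sub hk, Nat.cast_one]
      · intro m hm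
        rw [Finset.mem_Ico] at hm
        have hsub : k * L - m * L = (k - m) * L := by
          rw [← Nat.sub_mul]
        rw [hsub, h1 m hm.1 hm.2, h1 (k - m) (by omega) (by omega), ← pow_add]
        congr 1; omega
    · intro u _ v _ huv
      exact Nat.eq_of_mul_eq_mul_right (by omega) huv
  · intro j hj hjn
    rw [Finset.mem_Ico] at hj
    have hnd : ¬ L ∣ j := by
      rintro ⟨m, rfl⟩
      apply hjn
      simp only [Finset.mem_image, Finset.mem_Ico]
      refine ⟨m, ⟨?_, ?_⟩, mul_comm m L⟩
      · by_contra h; interval_cases m <;> omega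
      · by_contra h
        have h2 : k * L ≤ m * L := Nat.mul_le_mul_right L (by omega)
        rw [mul_comm L m] at hj
        omega
    rw [h0 j hj.1 hj.2 hnd, zero_mul]

lemma solves_iff (a : ℕ → ℝ) (ha : ∀ ℓ : ℕ, 1 ≤ ℓ → a ℓ = 1 / (ℓ : ℝ))
    (L : ℕ) (hL : 1 ≤ L) (x : ℕ → ℝ) :
    SolvesMV a (2 * (L : ℝ)) x ↔
      ∀ ℓ : ℕ, 1 ≤ ℓ →
        ((ℓ : ℝ) - L) * x ℓ = (L : ℝ) * ∑ j ∈ Finset.Ico 1 ℓ, x j * x (ℓ - j) := by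
  have hterm : ∀ ℓ k : ℕ, 1 ≤ ℓ →
      (((ℓ + k + 1 : ℕ) : ℝ) * a (ℓ + k + 1) - ((k + 1 : ℕ) : ℝ) * a (k + 1))
        * x (ℓ + k + 1) * x (k + 1) = 0 := by
    intro ℓ k hℓ
    rw [ha (ℓ + k + 1) (by omega), ha (k + 1) (by omega)]
    have h1 : ((ℓ + k + 1 : ℕ) : ℝ) ≠ 0 := Nat.cast_ne_zero.2 (by omega)
    have h2 : ((k + 1 : ℕ) : ℝ) ≠ 0 := Nat.cast_ne_zero.2 (by omega)
    rw [mul_one_div, mul_one_div, div_self h1, div_self h2, sub_self, zero_mul, zero_mul]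
  have hsumc : ∀ ℓ : ℕ, ∑ j ∈ Finset.Ico 1 ℓ, (j : ℝ) * a j * x j * x (ℓ - j)
      = ∑ j ∈ Finset.Ico 1 ℓ, x j * x (ℓ - j) := by
    intro ℓ
    refine Finset.sum_congr rfl fun j hj => ?_
    rw [Finset.mem_Ico] at hj
    rw [ha j hj.1, mul_one_div, div_self (Nat.cast_ne_zero.2 (by omega)), one_mul]
  constructor
  · intro h ℓ hℓ
    have heq := (h ℓ hℓ).2
    rw [tsum_congr (fun k => hterm ℓ k hℓ), tsum_zero, mul_zero, add_zero, hsumc,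
      ha ℓ hℓ] at heq
    have hℓ0 : (ℓ : ℝ) ≠ 0 := Nat.cast_ne_zero.2 (by omega)
    have hlhs : (ℓ : ℝ) * (2 - 2 * (L : ℝ) * (1 / (ℓ : ℝ))) * x ℓ
        = 2 * (((ℓ : ℝ) - L) * x ℓ) := by
      field_simp
    rw [hlhs] at heq
    linarith [heq]
  · intro h ℓ hℓ
    have hz : (fun k : ℕ =>
        (((ℓ + k + 1 : ℕ) : ℝ) * a (ℓ + k + 1) - ((k + 1 : ℕ) : ℝ) * a (k + 1))
          * x (ℓ + k + 1) * x (k + 1)) = fun _ => (0 : ℝ) := funext fun k => hterm ℓ k hℓ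
    refine ⟨by rw [hz]; exact summable_zero, ?_⟩
    rw [tsum_congr (fun k => hterm ℓ k hℓ), tsum_zero, mul_zero, add_zero, hsumc, ha ℓ hℓ]
    have hℓ0 : (ℓ : ℝ) ≠ 0 := Nat.cast_ne_zero.2 (by omega)
    have := h ℓ hℓ
    field_simp
    nlinarith [this]

lemma r_lt_one (x : ℕ → ℝ) (hx : MemL2w x) (L : ℕ) (hL : 1 ≤ L) (r : ℝ)
    (h1 : ∀ k : ℕ, 1 ≤ k → x (k * L) = r ^ k) : -1 < r ∧ r < 1 := by
  set f : ℕ → ℝ := fun ℓ => (1 + ((ℓ + 1 : ℕ) : ℝ) ^ 2) * x (ℓ + 1) ^ 2 with hf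
  set g : ℕ → ℕ := fun k => (k + 1) * L - 1 with hg
  have hgs : ∀ k, g k + 1 = (k + 1) * L := fun k =>
    Nat.succ_pred_eq_of_pos (Nat.mul_pos (Nat.succ_pos k) hL)
  have hginj : Function.Injective g := by
    intro u v huv
    have : (u + 1) * L = (v + 1) * L := by rw [← hgs u, ← hgs v, huv]
    have := Nat.eq_of_mul_eq_mul_right (by omega) this
    omega
  have hcomp : Summable (f ∘ g) := hx.comp_injective hginj
  have hle : ∀ k : ℕ, (r ^ 2) ^ (k + 1) ≤ (f ∘ g) k := by
    intro k
    have : (f ∘ g) k = (1 + (((k + 1) * L : ℕ) : ℝ) ^ 2) * (r ^ (k + 1)) ^ 2 := by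
      simp only [Function.comp, hf, hgs k, h1 (k + 1) (by omega)]
    rw [this]
    have hp : (r ^ 2) ^ (k + 1) = (r ^ (k + 1)) ^ 2 := by
      rw [← pow_mul, ← pow_mul, Nat.mul_comm]
    rw [hp]
    nlinarith [sq_nonneg (r ^ (k + 1)), sq_nonneg (((k + 1) * L : ℕ) : ℝ)]
  have hgeo : Summable fun k : ℕ => (r ^ 2) ^ (k + 1) :=
    Summable.of_nonneg_of_le (fun k => by positivity) hle hcomp
  have hgeo' : Summable fun k : ℕ => (r ^ 2) ^ k := (summable_nat_add_iff 1).1 hgeo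
  have hlt : |r ^ 2| < 1 := by
    have := summable_geometric_iff_norm_lt_one.1 hgeo'
    rwa [Real.norm_eq_abs] at this
  have : r ^ 2 < 1 := lt_of_le_of_lt (le_abs_self _) hlt
  constructor <;> nlinarith

/-- for the log-sine potential (`a_ℓ = 1/ℓ`) and `κ = 2ℓ*`, the solutions of
the stationary Fourier system in `ℓ²_w` are exactly the Fourier coefficient sequences of the
Poisson kernels with wave number `ℓ*`: `x_{kℓ*} = r^k` (`k ≥ 1`) for some `r ∈ (−1,1)`, and
`x_j = 0` when `ℓ* ∤ j`. -/
theorem logsine_poisson_kernels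
    (a : ℕ → ℝ) (ha : ∀ ℓ : ℕ, 1 ≤ ℓ → a ℓ = 1 / (ℓ : ℝ))
    (lstar : ℕ) (hl : 1 ≤ lstar) :
    ∀ x : ℕ → ℝ, MemL2w x →
      (SolvesMV a (2 * (lstar : ℝ)) x ↔
        ∃ r : ℝ, -1 < r ∧ r < 1 ∧
          (∀ k : ℕ, 1 ≤ k → x (k * lstar) = r ^ k) ∧
          (∀ j : ℕ, 1 ≤ j → ¬ lstar ∣ j → x j = 0)) := by
  intro x hx
  rw [solves_iff a ha lstar hl x]
  constructor
  · intro h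
    set r := x lstar with hr
    have main : ∀ ℓ : ℕ, 1 ≤ ℓ →
        (¬ lstar ∣ ℓ → x ℓ = 0) ∧ (∀ k, ℓ = k * lstar → x ℓ = r ^ k) := by
      intro ℓ
      induction ℓ using Nat.strong_induction_on with
      | _ ℓ ih =>
        intro hℓ
        have h0 : ∀ j, 1 ≤ j → j < ℓ → ¬ lstar ∣ j → x j = 0 :=
          fun j hj1 hj2 hnd => (ih j hj2 hj1).1 hnd
        have h1 : ∀ m, 1 ≤ m → m * lstar < ℓ → x (m * lstar) = r ^ m :=
          fun m hm hlt => (ih (m * lstar) hlt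
            (Nat.one_le_iff_ne_zero.2 (Nat.mul_ne_zero (by omega) (by omega)))).2 m rfl
        by_cases hd : lstar ∣ ℓ
        · obtain ⟨k, rfl⟩ : ∃ k, ℓ = k * lstar :=
            ⟨ℓ / lstar, (Nat.div_mul_cancel hd).symm⟩
          have hk : 1 ≤ k := Nat.pos_of_ne_zero (by rintro rfl; simp at hℓ)
          have hmain : x (k * lstar) = r ^ k := by
            rcases Nat.lt_or_ge k 2 with hk2 | hk2
            · have : k = 1 := by omega
              subst this
              rw [one_mul, pow_one]
            · have heq := h (k * lstar) hℓ
              rw [sum_dvd x r lstar k hl hk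
                (fun m hm hmk => h1 m hm ((Nat.mul_lt_mul_right (by omega : 0 < lstar)).2 hmk))
                h0] at heq
              have hne : (lstar : ℝ) * ((k : ℝ) - 1) ≠ 0 := by
                refine mul_ne_zero (Nat.cast_ne_zero.2 (by omega)) ?_
                have : (2 : ℝ) ≤ (k : ℝ) := by exact_mod_cast hk2
                intro hc; linarith
              apply mul_left_cancel₀ hne
              push_cast at heq
              linear_combination heq
          refine ⟨fun hnd => absurd (dvd_mul_left lstar k) hnd, ?_⟩
          intro k' hk'
          have : k' = k := Nat.eq_of_mul_eq_mul_right (by omega) hk'.symm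
          rw [this]; exact hmain
        · have heq := h ℓ hℓ
          rw [sum_ndvd x lstar ℓ hd h0, mul_zero] at heq
          have hne : (ℓ : ℝ) - (lstar : ℝ) ≠ 0 := by
            have : ℓ ≠ lstar := by rintro rfl; exact hd dvd_rfl
            exact sub_ne_zero.2 (by exact_mod_cast this)
          have hx0 : x ℓ = 0 := by
            rcases mul_eq_zero.1 heq with hc | hc
            · exact absurd hc hne
            · exact hc
          exact ⟨fun _ => hx0, fun k hk =>
            absurd ⟨k, by rw [hk, mul_comm]⟩ hd⟩
    have hx1 : ∀ k : ℕ, 1 ≤ k → x (k * lstar) = r ^ k := fun k hk =>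
      (main (k * lstar) (Nat.one_le_iff_ne_zero.2
        (Nat.mul_ne_zero (by omega) (by omega)))).2 k rfl
    have hx0 : ∀ j : ℕ, 1 ≤ j → ¬ lstar ∣ j → x j = 0 := fun j hj hnd => (main j hj).1 hnd
    obtain ⟨hm1, hm2⟩ := r_lt_one x hx lstar hl r hx1
    exact ⟨r, hm1, hm2, hx1, hx0⟩
  · rintro ⟨r, -, -, hx1, hx0⟩ ℓ hℓ
    by_cases hd : lstar ∣ ℓ
    · obtain ⟨k, rfl⟩ : ∃ k, ℓ = k * lstar :=
        ⟨ℓ / lstar, (Nat.div_mul_cancel hd).symm⟩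
      have hk : 1 ≤ k := Nat.pos_of_ne_zero (by rintro rfl; simp at hℓ)
      rw [sum_dvd x r lstar k hl hk (fun m hm _ => hx1 m hm)
        (fun j hj _ hnd => hx0 j hj hnd), hx1 k hk]
      push_cast
      ring
    · rw [sum_ndvd x lstar ℓ hd (fun j hj _ hnd => hx0 j hj hnd), mul_zero,
        hx0 ℓ hℓ hd, mul_zero]
end
end
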